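/- A pair (I, C_y) of m×m matrices over GF(2), where I is the identity, is dyadic if and only if all leading principal minors of C_y J are nonzero, where J is the anti-diagonal matrix. -/

import Mathlib

open Matrix

/-- The binary Pascal matrix over GF(2): entries C(j-1, i-1) mod 2 (1-indexed),
i.e. C(j, i) with 0-indexed `Fin`. -/
def pascal (m : ℕ) : Matrix (Fin m) (Fin m) (ZMod 2) :=
  fun i j => (Nat.choose j.val i.val : ZMod 2)

/-- The anti-diagonal matrix over GF(2), with ones on the anti-diagonal. -/
def antiDiag (m : ℕ) : Matrix (Fin m) (Fin m) (ZMod 2) :=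
  fun i j => if i.val + j.val + 1 = m then 1 else 0
/-- The hybrid matrix whose first `m - r` rows are the first `m - r` rows of `Cx`
and whose last `r` rows are the first `r` rows of `Cy`. -/
def hybrid (m r : ℕ) (Cx Cy : Matrix (Fin m) (Fin m) (ZMod 2)) :
    Matrix (Fin m) (Fin m) (ZMod 2) :=
  fun i j =>
    if i.val < m - r then Cx i j
    else Cy ⟨i.val - (m - r), Nat.lt_of_le_of_lt (Nat.sub_le _ _) i.isLt⟩ j

/-- A dyadic pair: all hybrid matrices are invertible. -/
def DyadicPair {m : ℕ} (Cx Cy : Matrix (Fin m) (Fin m) (ZMod 2)) : Prop :=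
  ∀ r ≤ m, (hybrid m r Cx Cy).det ≠ 0
/-- A progressive matrix: all leading principal minors are nonzero. -/
def ProgressiveMat {m : ℕ} (C : Matrix (Fin m) (Fin m) (ZMod 2)) : Prop :=
  ∀ k, ∀ hk : k ≤ m, (C.submatrix (Fin.castLE hk) (Fin.castLE hk)).det ≠ 0

/-- The `r × r` submatrix of `Cy` on rows `0..r-1` and columns `m-r..m-1`. -/
def cornerSub (m r : ℕ) (hr : r ≤ m) (Cy : Matrix (Fin m) (Fin m) (ZMod 2)) :
    Matrix (Fin r) (Fin r) (ZMod 2) :=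
  fun i j => Cy (Fin.castLE hr i) ⟨m - r + j.val, by omega⟩

lemma det_submatrix_id_perm {k : ℕ} (σ : Equiv.Perm (Fin k))
    (M : Matrix (Fin k) (Fin k) (ZMod 2)) :
    (M.submatrix id σ).det = M.det := by
  rw [Matrix.det_permute']
  rcases Int.units_eq_one_or (Equiv.Perm.sign σ) with h | h <;>
    simp [h, CharTwo.neg_eq]

lemma det_hybrid_one (m r : ℕ) (hr : r ≤ m) (Cy : Matrix (Fin m) (Fin m) (ZMod 2)) :
    (hybrid m r 1 Cy).det = (cornerSub m r hr Cy).det := by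
  have hmr : m - r + r = m := Nat.sub_add_cancel hr
  let e : Fin (m - r) ⊕ Fin r ≃ Fin m := finSumFinEquiv.trans (finCongr hmr)
  have hl : ∀ i : Fin (m - r), (e (Sum.inl i)).val = i.val := by
    intro i; simp [e]
  have hr' : ∀ i : Fin r, (e (Sum.inr i)).val = m - r + i.val := by
    intro i; simp [e]
  have hblock : (hybrid m r 1 Cy).submatrix e e =
      fromBlocks (1 : Matrix (Fin (m - r)) (Fin (m - r)) (ZMod 2)) 0
        (fun i j => Cy (Fin.castLE hr i) ⟨j.val, by omega⟩) (cornerSub m r hr Cy) := by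
    ext i j
    rcases i with i | i <;> rcases j with j | j
    · have h1 : (e (Sum.inl i)).val < m - r := by rw [hl]; exact i.isLt
      simp only [submatrix_apply, hybrid, h1, if_pos, fromBlocks_apply₁₁,
        Matrix.one_apply, Fin.ext_iff, hl]
      rw [if_pos i.isLt]
      show _ = (1 : Matrix (Fin (m - r)) (Fin (m - r)) (ZMod 2)) i j
      simp [Matrix.one_apply, Fin.ext_iff]
    · have h1 : (e (Sum.inl i)).val < m - r := by rw [hl]; exact i.isLt
      have h2 : (e (Sum.inl i)).val ≠ (e (Sum.inr j)).val := by
        rw [hl, hr']; omega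
      simp only [submatrix_apply, hybrid, h1, if_pos, fromBlocks_apply₁₂,
        Matrix.one_apply, Fin.ext_iff, Matrix.zero_apply, if_neg h2]
      rfl
    · have h1 : ¬ (e (Sum.inr i)).val < m - r := by rw [hr']; omega
      simp only [submatrix_apply, hybrid, h1, if_false, fromBlocks_apply₂₁]
      congr 1 <;> simp [Fin.ext_iff, hr', hl]
    · have h1 : ¬ (e (Sum.inr i)).val < m - r := by rw [hr']; omega
      simp only [submatrix_apply, hybrid, h1, if_false, fromBlocks_apply₂₂, cornerSub]
      congr 1 <;> simp [Fin.ext_iff, hr']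
  calc (hybrid m r 1 Cy).det = ((hybrid m r 1 Cy).submatrix e e).det :=
        (Matrix.det_submatrix_equiv_self e _).symm
    _ = (cornerSub m r hr Cy).det := by
        rw [hblock]
        exact (Matrix.det_fromBlocks_zero₁₂ _ _ _).trans (by rw [Matrix.det_one, one_mul])

lemma mul_antiDiag_apply (m : ℕ) (Cy : Matrix (Fin m) (Fin m) (ZMod 2)) (i j : Fin m) :
    (Cy * antiDiag m) i j = Cy i (Fin.rev j) := by
  rw [Matrix.mul_apply, Finset.sum_eq_single (Fin.rev j)]
  · have : (Fin.rev j).val + j.val + 1 = m := by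
      rw [Fin.val_rev]; omega
    simp only [antiDiag, if_pos this, mul_one]
  · intro b _ hb
    have : ¬ (b.val + j.val + 1 = m) := by
      intro h
      apply hb
      rw [Fin.ext_iff, Fin.val_rev]
      omega
    simp [antiDiag, this]
  · simp

lemma det_minor (m k : ℕ) (hk : k ≤ m) (Cy : Matrix (Fin m) (Fin m) (ZMod 2)) :
    ((Cy * antiDiag m).submatrix (Fin.castLE hk) (Fin.castLE hk)).det =
      (cornerSub m k hk Cy).det := by
  have h : (Cy * antiDiag m).submatrix (Fin.castLE hk) (Fin.castLE hk)
      = (cornerSub m k hk Cy).submatrix id Fin.revPerm := by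
    ext i j
    simp only [submatrix_apply, mul_antiDiag_apply, cornerSub, id_eq, Fin.revPerm_apply]
    have hcol : Fin.rev (Fin.castLE hk j)
        = (⟨m - k + (Fin.rev j).val, by have := (Fin.rev j).isLt; omega⟩ : Fin m) := by
      have hj := j.isLt
      apply Fin.ext
      simp [Fin.val_rev]
      omega
    rw [hcol]
  rw [h, det_submatrix_id_perm]

/-- `(I, C_y)` is a dyadic pair iff all leading principal minors of `C_y J`
are nonzero. -/
theorem dyadicPair_one_iff (m : ℕ) (Cy : Matrix (Fin m) (Fin m) (ZMod 2)) :
    DyadicPair 1 Cy ↔ ProgressiveMat (Cy * antiDiag m) := by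
  constructor
  · intro h k hk
    rw [det_minor m k hk Cy, ← det_hybrid_one m k hk Cy]
    exact h k hk
  · intro h r hr
    rw [det_hybrid_one m r hr Cy, ← det_minor m r hr Cy]
    exact h r hr
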